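/- Let G be a regular distribution function and H any distribution function. If there exist γ ∈ (0,1) and a nondecreasing sequence (v_n) with G(v_n)^n → γ and H(v_n)^n → γ, then G and H are strictly tail-equivalent, i.e. they have the same right endpoint and (1 − H(x))/(1 − G(x)) → 1 as x tends to that endpoint from the left. -/

import Mathlib

open Filter Topology Classical

/-- A distribution function: nondecreasing, right-continuous, limits 0 and 1. -/
def IsDistFun (G : ℝ → ℝ) : Prop :=
  Monotone G ∧ (∀ x, ContinuousWithinAt G (Set.Ici x) x) ∧
    Tendsto G atBot (𝓝 0) ∧ Tendsto G atTop (𝓝 1)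

/-- The filter of approach to the right endpoint `G_* = sup {x : G x < 1}` from the left
(`atTop` if the endpoint is `+∞`). -/
noncomputable def endFilter (G : ℝ → ℝ) : Filter ℝ :=
  if BddAbove {x | G x < 1} then 𝓝[<] (sSup {x | G x < 1}) else atTop

/-- Regularity in the sense of O'Brien: `G(G_*−) = 1` and `(1−G(x−))/(1−G(x)) → 1`
as `x → G_*−`. -/
def RegularDF (G : ℝ → ℝ) : Prop :=
  Tendsto G (endFilter G) (𝓝 1) ∧
  Tendsto (fun x => (1 - Function.leftLim G x) / (1 - G x)) (endFilter G) (𝓝 1)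

/-- Strict tail-equivalence: same right endpoint and `(1−H(x))/(1−G(x)) → 1` at the endpoint. -/
def StrictTailEquiv (G H : ℝ → ℝ) : Prop :=
  (BddAbove {x | G x < 1} ↔ BddAbove {x | H x < 1}) ∧
  sSup {x | G x < 1} = sSup {x | H x < 1} ∧
  Tendsto (fun x => (1 - H x) / (1 - G x)) (endFilter G) (𝓝 1)

lemma slope_log : Tendsto (fun t : ℝ => Real.log t / (t - 1)) (𝓝[≠] 1) (𝓝 1) := by
  have h := Real.hasDerivAt_log (one_ne_zero)
  rw [hasDerivAt_iff_tendsto_slope] at h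
  rw [inv_one] at h
  refine h.congr (fun t => ?_)
  simp [slope_def_field, div_eq_inv_mul]

lemma ratio_log : Tendsto (fun t : ℝ => (1 - t) / (-Real.log t)) (𝓝[≠] 1) (𝓝 1) := by
  have := slope_log.inv₀ (by norm_num)
  rw [inv_one] at this
  refine this.congr (fun t => ?_)
  rw [inv_div, ← neg_div_neg_eq, neg_sub]

lemma distfun_nonneg {F : ℝ → ℝ} (hF : IsDistFun F) (x : ℝ) : 0 ≤ F x :=
  le_of_tendsto hF.2.2.1 ((eventually_le_atBot x).mono fun _ hy => hF.1 hy)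

lemma distfun_le_one {F : ℝ → ℝ} (hF : IsDistFun F) (x : ℝ) : F x ≤ 1 :=
  ge_of_tendsto hF.2.2.2 ((eventually_ge_atTop x).mono fun _ hy => hF.1 hy)

lemma key_asymp {F : ℝ → ℝ} (h0 : ∀ x, 0 ≤ F x) {γ : ℝ} (hγ0 : 0 < γ) (hγ1 : γ < 1)
    {v : ℕ → ℝ} (hFv : Tendsto (fun n : ℕ => F (v n) ^ n) atTop (𝓝 γ)) :
    Tendsto (fun n : ℕ => (n : ℝ) * (1 - F (v n))) atTop (𝓝 (-Real.log γ)) ∧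
    (∀ᶠ n in atTop, F (v n) < 1) := by
  have hlt : ∀ᶠ n in atTop, F (v n) < 1 := by
    filter_upwards [hFv.eventually (gt_mem_nhds (by linarith : γ < (1+γ)/2))] with n hn
    by_contra hle
    push_neg at hle
    have : (1:ℝ) ≤ F (v n) ^ n := one_le_pow₀ hle
    linarith
  have hpos : ∀ᶠ n in atTop, 0 < F (v n) := by
    filter_upwards [hFv.eventually (lt_mem_nhds (by linarith : γ/2 < γ)),
      eventually_ge_atTop 1] with n hn hn1
    rcases (h0 (v n)).lt_or_eq with h | h
    · exact h
    · exfalso; rw [← h, zero_pow (by omega)] at hn; linarith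
  have hlog : Tendsto (fun n : ℕ => (n : ℝ) * Real.log (F (v n))) atTop (𝓝 (Real.log γ)) := by
    have := (Real.continuousAt_log hγ0.ne').tendsto.comp hFv
    refine this.congr fun n => ?_
    simp [Real.log_pow]
  have hlog0 : Tendsto (fun n : ℕ => Real.log (F (v n))) atTop (𝓝 0) := by
    have h := hlog.mul tendsto_one_div_atTop_nhds_zero_nat
    rw [mul_zero] at h
    refine h.congr' ?_
    filter_upwards [eventually_ge_atTop 1] with n hn
    have : (n:ℝ) ≠ 0 := Nat.cast_ne_zero.mpr (by omega)
    field_simp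
  have ht1 : Tendsto (fun n : ℕ => F (v n)) atTop (𝓝 1) := by
    have h := (Real.continuous_exp.tendsto 0).comp hlog0
    rw [Real.exp_zero] at h
    refine h.congr' ?_
    filter_upwards [hpos] with n hn
    simp [Function.comp, Real.exp_log hn]
  have hne : Tendsto (fun n : ℕ => F (v n)) atTop (𝓝[≠] (1:ℝ)) :=
    tendsto_nhdsWithin_of_tendsto_nhds_of_eventually_within _ ht1
      (hlt.mono fun n h => ne_of_lt h)
  have hr : Tendsto (fun n : ℕ => (1 - F (v n)) / (-Real.log (F (v n)))) atTop (𝓝 1) :=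
    ratio_log.comp hne
  refine ⟨?_, hlt⟩
  have h := hlog.neg.mul hr
  rw [mul_one] at h
  refine h.congr' ?_
  filter_upwards [hpos, hlt] with n h1 h2
  have hL : Real.log (F (v n)) ≠ 0 := ne_of_lt (Real.log_neg h1 h2)
  field_simp

lemma not_all_le {F : ℝ → ℝ} (h0 : ∀ x, 0 ≤ F x) (hmF : Monotone F) {γ : ℝ} (hγ0 : 0 < γ)
    {v : ℕ → ℝ} (hFv : Tendsto (fun n : ℕ => F (v n) ^ n) atTop (𝓝 γ))
    {a : ℝ} (ha : F a < 1) : ¬ (∀ n, v n ≤ a) := by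
  intro hall
  have h1 : Tendsto (fun n : ℕ => F (v n) ^ n) atTop (𝓝 0) :=
    squeeze_zero (fun n => pow_nonneg (h0 _) n)
      (fun n => pow_le_pow_left₀ (h0 _) (hmF (hall n)) n)
      (tendsto_pow_atTop_nhds_zero_of_lt_one (h0 a) ha)
  exact absurd (tendsto_nhds_unique hFv h1) (by linarith)

theorem stmt1 (G H : ℝ → ℝ) (hG : IsDistFun G) (hGreg : RegularDF G)
    (hH : IsDistFun H) (γ : ℝ) (hγ : γ ∈ Set.Ioo (0 : ℝ) 1)
    (v : ℕ → ℝ) (hmono : Monotone v)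
    (hGv : Tendsto (fun n : ℕ => G (v n) ^ n) atTop (𝓝 γ))
    (hHv : Tendsto (fun n : ℕ => H (v n) ^ n) atTop (𝓝 γ)) :
    StrictTailEquiv G H := by
  obtain ⟨hγ0, hγ1⟩ := hγ
  set c : ℝ := -Real.log γ with hc_def
  have hc : 0 < c := by
    have := Real.log_neg hγ0 hγ1
    simp only [hc_def]; linarith
  obtain ⟨hA, hGlt⟩ := key_asymp (distfun_nonneg hG) hγ0 hγ1 hGv
  obtain ⟨hB, hHlt⟩ := key_asymp (distfun_nonneg hH) hγ0 hγ1 hHv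
  -- the sets {G < 1} and {H < 1} coincide
  have hkey : ∀ (F F' : ℝ → ℝ), Monotone F → (∀ x, 0 ≤ F' x) → Monotone F' →
      (∀ᶠ n in atTop, F (v n) < 1) →
      Tendsto (fun n : ℕ => F' (v n) ^ n) atTop (𝓝 γ) →
      ∀ x, F x = 1 → ¬ F' x < 1 := by
    intro F F' hmF h0' hmF' hFlt hF'v x hx hF'x
    obtain ⟨N0, hN0⟩ := eventually_atTop.mp hFlt
    refine not_all_le h0' hmF' hγ0 hF'v hF'x fun n => ?_
    have h1 : v (max n N0) ≤ x := by
      by_contra hcon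
      push_neg at hcon
      exact absurd (hx ▸ hmF hcon.le) (not_le.mpr (hN0 _ (le_max_right n N0)))
    exact le_trans (hmono (le_max_left n N0)) h1
  have hset : {x | G x < 1} = {x | H x < 1} := by
    ext x
    simp only [Set.mem_setOf_eq]
    constructor
    · intro hx
      by_contra hcon
      push_neg at hcon
      have hHx : H x = 1 := le_antisymm (distfun_le_one hH x) hcon
      exact hkey H G hH.1 (distfun_nonneg hG) hG.1 hHlt hGv x hHx hx
    · intro hx
      by_contra hcon
      push_neg at hcon
      have hGx : G x = 1 := le_antisymm (distfun_le_one hG x) hcon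
      exact hkey G H hG.1 (distfun_nonneg hH) hH.1 hGlt hHv x hGx hx
  -- structural facts about endFilter G and v
  have hbundle : Tendsto v atTop (endFilter G) ∧
      (∀ᶠ x in endFilter G, G x < 1 ∧ ∃ n, x < v n) ∧
      (∀ N, ∀ᶠ x in endFilter G, v N ≤ x) := by
    obtain ⟨N0, hN0⟩ := eventually_atTop.mp hGlt
    by_cases hbdd : BddAbove {x | G x < 1}
    · have hEF : endFilter G = 𝓝[<] (sSup {x | G x < 1}) := if_pos hbdd
      set s := sSup {x | G x < 1} with hs_def
      have hSne : Set.Nonempty {x | G x < 1} := ⟨v N0, hN0 _ le_rfl⟩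
      have hlt_mem : ∀ x, x < s → G x < 1 := by
        intro x hx
        obtain ⟨z, hz, hxz⟩ := exists_lt_of_lt_csSup hSne hx
        exact lt_of_le_of_lt (hG.1 hxz.le) hz
      -- G s = 1
      have hGs : G s = 1 := by
        have hone : ∀ y, s < y → G y = 1 := by
          intro y hy
          refine le_antisymm (distfun_le_one hG y) (not_lt.mp fun hlt => ?_)
          exact absurd (le_csSup hbdd hlt) (not_le.mpr hy)
        have h1 : Tendsto G (𝓝[>] s) (𝓝 (G s)) :=
          ((hG.2.1 s).mono_left (nhdsWithin_mono _ Set.Ioi_subset_Ici_self))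
        have h2 : Tendsto G (𝓝[>] s) (𝓝 1) := by
          refine Tendsto.congr' ?_ tendsto_const_nhds
          filter_upwards [eventually_mem_nhdsWithin] with y hy
          exact (hone y hy).symm
        exact tendsto_nhds_unique h1 h2
      have hvlt : ∀ n, v n < s := by
        intro n
        have h1 : G (v (max n N0)) < 1 := hN0 _ (le_max_right n N0)
        have h2 : v (max n N0) ≤ s := le_csSup hbdd h1
        have h3 : v (max n N0) < s := lt_of_le_of_ne h2 fun he => by
          rw [he, hGs] at h1; exact lt_irrefl 1 h1
        exact lt_of_le_of_lt (hmono (le_max_left n N0)) h3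
      have hvtends : Tendsto v atTop (𝓝 s) := by
        refine tendsto_order.mpr ⟨?_, fun a ha => Eventually.of_forall fun n =>
          lt_of_lt_of_le (hvlt n) (le_of_lt ha)⟩
        intro a ha
        by_contra hcon
        rw [not_eventually] at hcon
        have hall : ∀ n, v n ≤ a := by
          intro n
          obtain ⟨m, hmn, hm⟩ := (frequently_atTop.mp hcon n)
          exact le_trans (hmono hmn) (not_lt.mp hm)
        exact not_all_le (distfun_nonneg hG) hG.1 hγ0 hGv (hlt_mem a ha) hall
      have hvend : Tendsto v atTop (endFilter G) := by
        rw [hEF]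
        exact tendsto_nhdsWithin_of_tendsto_nhds_of_eventually_within _ hvtends
          (Eventually.of_forall hvlt)
      refine ⟨hvend, ?_, ?_⟩
      · rw [hEF]
        filter_upwards [eventually_mem_nhdsWithin] with x hx
        refine ⟨hlt_mem x hx, ?_⟩
        exact ((tendsto_order.mp hvtends).1 x hx).exists
      · intro N
        rw [hEF]
        filter_upwards [Ioo_mem_nhdsLT (hvlt N)] with x hx
        exact hx.1.le
    · have hEF : endFilter G = atTop := if_neg hbdd
      have hlt_all : ∀ x, G x < 1 := by
        intro x
        obtain ⟨z, hz, hxz⟩ := not_bddAbove_iff.mp hbdd x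
        exact lt_of_le_of_lt (hG.1 hxz.le) hz
      have hvtop : Tendsto v atTop atTop := by
        refine tendsto_atTop.mpr fun M => ?_
        by_contra hcon
        rw [not_eventually] at hcon
        have hall : ∀ n, v n ≤ M := by
          intro n
          obtain ⟨m, hmn, hm⟩ := (frequently_atTop.mp hcon n)
          exact le_trans (hmono hmn) (not_le.mp hm).le
        exact not_all_le (distfun_nonneg hG) hG.1 hγ0 hGv (hlt_all M) hall
      refine ⟨hEF ▸ hvtop, ?_, ?_⟩
      · rw [hEF]
        refine Eventually.of_forall fun x => ⟨hlt_all x, ?_⟩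
        exact (hvtop.eventually_gt_atTop x).exists
      · intro N
        rw [hEF]
        exact eventually_ge_atTop (v N)
  obtain ⟨hvend, hend_mem, hend_ge⟩ := hbundle
  refine ⟨by rw [hset], by rw [hset], ?_⟩
  -- index function
  set k : ℝ → ℕ := fun x => (if h : ∃ n, x < v n then Nat.find h else 0) - 1 with hk_def
  have hk_lower : ∀ x (h : ∃ n, x < v n), v 0 ≤ x → v (k x) ≤ x ∧ x < v (k x + 1) := by
    intro x h h0
    have hk : k x = Nat.find h - 1 := by rw [hk_def]; simp only [dif_pos h]
    have hfind0 : Nat.find h ≠ 0 := by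
      intro he
      have := Nat.find_spec h
      rw [he] at this
      exact absurd h0 (not_le.mpr this)
    have hsucc : k x + 1 = Nat.find h := by omega
    constructor
    · rw [hk]
      exact not_lt.mp (Nat.find_min h (by omega))
    · rw [hsucc]
      exact Nat.find_spec h
  have hk_ge : ∀ N x (h : ∃ n, x < v n), v N ≤ x → N ≤ k x := by
    intro N x h hN
    have hk : k x = Nat.find h - 1 := by rw [hk_def]; simp only [dif_pos h]
    have : N < Nat.find h := by
      by_contra hcon
      push_neg at hcon
      exact absurd (le_trans (hmono hcon) hN) (not_le.mpr (Nat.find_spec h))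
    omega
  have hktends : Tendsto k (endFilter G) atTop := by
    refine tendsto_atTop.mpr fun N => ?_
    filter_upwards [hend_ge N, hend_mem] with x hx hmem
    exact hk_ge N x hmem.2 hx
  -- sequences a and b
  set a : ℕ → ℝ := fun n => (1 - H (v (n+1))) / (1 - G (v n)) with ha_def
  set b : ℕ → ℝ := fun n => (1 - H (v n)) / (1 - Function.leftLim G (v (n+1))) with hb_def
  have hfrac : Tendsto (fun n : ℕ => (n:ℝ) / (n+1)) atTop (𝓝 1) :=
    tendsto_natCast_div_add_atTop (1:ℝ)
  have hshiftB : Tendsto (fun n : ℕ => (n:ℝ) * (1 - H (v (n+1)))) atTop (𝓝 c) := by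
    have h1 := (hB.comp (tendsto_add_atTop_nat 1)).mul hfrac
    rw [mul_one] at h1
    refine h1.congr fun n => ?_
    have hne : ((n:ℝ)+1) ≠ 0 := by positivity
    simp only [Function.comp]
    push_cast
    field_simp
  have hshiftA : Tendsto (fun n : ℕ => (n:ℝ) * (1 - G (v (n+1)))) atTop (𝓝 c) := by
    have h1 := (hA.comp (tendsto_add_atTop_nat 1)).mul hfrac
    rw [mul_one] at h1
    refine h1.congr fun n => ?_
    have hne : ((n:ℝ)+1) ≠ 0 := by positivity
    simp only [Function.comp]
    push_cast
    field_simp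
  have ha : Tendsto a atTop (𝓝 1) := by
    have h1 := hshiftB.div hA hc.ne'
    rw [div_self hc.ne'] at h1
    refine h1.congr' ?_
    filter_upwards [eventually_ge_atTop 1] with n hn
    have hne : (n:ℝ) ≠ 0 := Nat.cast_ne_zero.mpr (by omega)
    rw [ha_def]
    exact (mul_div_mul_left _ _ hne)
  have hq : Tendsto (fun n => (1 - H (v n)) / (1 - G (v (n+1)))) atTop (𝓝 1) := by
    have h1 := hB.div hshiftA hc.ne'
    rw [div_self hc.ne'] at h1
    refine h1.congr' ?_
    filter_upwards [eventually_ge_atTop 1] with n hn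
    have hne : (n:ℝ) ≠ 0 := Nat.cast_ne_zero.mpr (by omega)
    exact (mul_div_mul_left _ _ hne)
  have hR : Tendsto (fun n => (1 - Function.leftLim G (v (n+1))) / (1 - G (v (n+1)))) atTop (𝓝 1) :=
    hGreg.2.comp (hvend.comp (tendsto_add_atTop_nat 1))
  have hb : Tendsto b atTop (𝓝 1) := by
    have h1 := hq.div hR one_ne_zero
    rw [div_one] at h1
    refine h1.congr' ?_
    filter_upwards [(tendsto_add_atTop_nat 1).eventually hGlt] with n hn
    have hg1 : (1:ℝ) - G (v (n+1)) ≠ 0 := by intro he; rw [sub_eq_zero] at he; rw [← he] at hn; exact lt_irrefl _ hn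
    rw [hb_def]
    simp only [Pi.div_apply]
    by_cases hl0 : (1:ℝ) - Function.leftLim G (v (n+1)) = 0
    · rw [hl0, zero_div, div_zero, div_zero]
    · field_simp
  -- the sandwich
  obtain ⟨N1, hN1⟩ := eventually_atTop.mp (hGlt.and hHlt)
  have hsandwich : ∀ᶠ x in endFilter G,
      a (k x) ≤ (1 - H x) / (1 - G x) ∧ (1 - H x) / (1 - G x) ≤ b (k x) := by
    filter_upwards [hend_mem, hend_ge 0, hktends.eventually (eventually_ge_atTop N1)]
      with x hmem h0 hkN
    obtain ⟨hGx, hex⟩ := hmem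
    obtain ⟨hkle, hklt⟩ := hk_lower x hex h0
    have hGK : G (v (k x)) < 1 := (hN1 (k x) hkN).1
    have hHK1 : H (v (k x + 1)) < 1 := (hN1 (k x + 1) (by omega)).2
    have hGK1 : G (v (k x + 1)) < 1 := (hN1 (k x + 1) (by omega)).1
    have hGxpos : 0 < 1 - G x := by linarith
    have hHxle : H x ≤ 1 := distfun_le_one hH x
    constructor
    · rw [ha_def]
      refine div_le_div₀ (by linarith) ?_ hGxpos ?_
      · have : H x ≤ H (v (k x + 1)) := hH.1 hklt.le
        linarith
      · have : G (v (k x)) ≤ G x := hG.1 hkle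
        linarith
    · have hlK : Function.leftLim G (v (k x + 1)) ≤ G (v (k x + 1)) := hG.1.leftLim_le le_rfl
      have hGxle : G x ≤ Function.leftLim G (v (k x + 1)) := hG.1.le_leftLim hklt
      rw [hb_def]
      refine div_le_div₀ ?_ ?_ (by linarith) (by linarith)
      · have := distfun_le_one hH (v (k x)); linarith
      · have : H (v (k x)) ≤ H x := hH.1 hkle
        linarith
  exact tendsto_of_tendsto_of_tendsto_of_le_of_le' (ha.comp hktends) (hb.comp hktends)
    (hsandwich.mono fun x h => h.1) (hsandwich.mono fun x h => h.2)
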